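/- arXiv:1112.5718 — 2 statements merged into one kernel-verified Lean document; each statement's English description precedes it below -/
import Mathlib

section
/- If h₁, h₂ ∈ C(K) satisfy Ψ(h₁) = h₁ and Ψ(h₂) = h₂, then the sequence {Ψ^n(h₁h₂)}_{n≥1} converges uniformly on K. -/
open MeasureTheory Filter Topology ComplexOrder

/-- `Φ` is a Markov operator on the bounded Borel measurable functions on `U`:
for each `x` there is a Borel probability measure `P x` representing `Φ` at `x`. -/
def IsMarkovOperator {U : Type*} [MeasurableSpace U]
    (Φ : (U → ℂ) → (U → ℂ)) : Prop :=
  ∀ x : U, ∃ P : Measure U, IsProbabilityMeasure P ∧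
    ∀ f : U → ℂ, Measurable f → (∃ C : ℝ, ∀ y, ‖f y‖ ≤ C) →
      Φ f x = ∫ y, f y ∂P

/-- `Φ` has the strong Feller property: it maps bounded Borel measurable
functions to continuous functions. -/
def HasStrongFeller {U : Type*} [MeasurableSpace U] [TopologicalSpace U]
    (Φ : (U → ℂ) → (U → ℂ)) : Prop :=
  ∀ f : U → ℂ, Measurable f → (∃ C : ℝ, ∀ y, ‖f y‖ ≤ C) → Continuous (Φ f)

/-- Boundary condition (A): for each boundary point `x` there is a barrier
`h ∈ C(K)` with `h x = 0`, `h < 0` off `x`, and `Φ (h_U) ≥ h_U` on `U`. -/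
def CondA {K : Type*} [TopologicalSpace K] (U : Set K)
    (Φ : (↥U → ℂ) → (↥U → ℂ)) : Prop :=
  ∀ x ∈ Uᶜ, ∃ h : C(K, ℂ), h x = 0 ∧ (∀ y : K, y ≠ x → h y < 0) ∧
    ∀ u : ↥U, h u.1 ≤ Φ (fun v : ↥U => h v.1) u

/-- Maximum principle (B): every real-valued `g ∈ C(K)` with `Φ (g_U) ≥ g_U`
on `U` attaining its global maximum inside `U` is constant. -/
def CondB {K : Type*} [TopologicalSpace K] (U : Set K)
    (Φ : (↥U → ℂ) → (↥U → ℂ)) : Prop :=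
  ∀ g : C(K, ℂ), (∀ x : K, (g x).im = 0) →
    (∀ u : ↥U, g u.1 ≤ Φ (fun v : ↥U => g v.1) u) →
    (∃ z ∈ U, ∀ x : K, g x ≤ g z) →
    ∀ x y : K, g x = g y

/-- The map `Ψ` : `Ψ f = Φ (f_U)` on `U` and `Ψ f = f` on `∂U = K \ U`. -/
noncomputable def psiFun {K : Type*} (U : Set K)
    (Φ : (↥U → ℂ) → (↥U → ℂ)) (f : K → ℂ) : K → ℂ :=
  open Classical in fun x => if hx : x ∈ U then Φ (fun v : ↥U => f v.1) ⟨x, hx⟩ else f x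

set_option linter.unusedSectionVars false
set_option linter.unusedVariables false

section Aux
variable {K : Type*} [MetricSpace K] [CompactSpace K] [MeasurableSpace K] [BorelSpace K]
variable {U : Set K} {Φ : (↥U → ℂ) → (↥U → ℂ)}

/-- restriction to U -/
def resU (U : Set K) (f : K → ℂ) : ↥U → ℂ := fun v => f v.1

lemma bdd_of_cont (f : K → ℂ) (hf : Continuous f) : ∃ C : ℝ, ∀ y : K, ‖f y‖ ≤ C :=
  ⟨‖(⟨f, hf⟩ : C(K, ℂ))‖, fun y => ContinuousMap.norm_coe_le_norm (⟨f, hf⟩ : C(K, ℂ)) y⟩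

lemma resU_meas {f : K → ℂ} (hf : Continuous f) : Measurable (resU U f) :=
  hf.measurable.comp measurable_subtype_coe

lemma resU_bdd {f : K → ℂ} (hf : Continuous f) : ∃ C : ℝ, ∀ v : ↥U, ‖resU U f v‖ ≤ C := by
  obtain ⟨C, hC⟩ := bdd_of_cont f hf
  exact ⟨C, fun v => hC v.1⟩

lemma integrable_of_bdd {P : Measure ↥U} [IsProbabilityMeasure P] {f : ↥U → ℂ}
    (hm : Measurable f) (hb : ∃ C : ℝ, ∀ y, ‖f y‖ ≤ C) : Integrable f P := by
  obtain ⟨C, hC⟩ := hb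
  exact ⟨hm.aestronglyMeasurable, HasFiniteIntegral.of_bounded (ae_of_all _ hC)⟩


section Markov
variable (hM : IsMarkovOperator Φ)
include hM

lemma phi_const (c : ℂ) (x : ↥U) : Φ (fun _ => c) x = c := by
  obtain ⟨P, hP, hrep⟩ := hM x
  rw [hrep _ measurable_const ⟨‖c‖, fun _ => le_refl _⟩]
  simp [integral_const, measure_univ]

lemma phi_add {f g : ↥U → ℂ} (hfm : Measurable f) (hfb : ∃ C, ∀ y, ‖f y‖ ≤ C)
    (hgm : Measurable g) (hgb : ∃ C, ∀ y, ‖g y‖ ≤ C) (x : ↥U) :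
    Φ (fun y => f y + g y) x = Φ f x + Φ g x := by
  obtain ⟨P, hP, hrep⟩ := hM x
  obtain ⟨C, hC⟩ := hfb; obtain ⟨D, hD⟩ := hgb
  rw [hrep (fun y => f y + g y) (hfm.add hgm) ⟨C + D, fun y => (norm_add_le _ _).trans (add_le_add (hC y) (hD y))⟩,
    hrep f hfm ⟨C, hC⟩, hrep g hgm ⟨D, hD⟩]
  exact integral_add (integrable_of_bdd hfm ⟨C, hC⟩) (integrable_of_bdd hgm ⟨D, hD⟩)

lemma phi_mul {f : ↥U → ℂ} (c : ℂ) (hfm : Measurable f) (hfb : ∃ C, ∀ y, ‖f y‖ ≤ C) (x : ↥U) :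
    Φ (fun y => c * f y) x = c * Φ f x := by
  obtain ⟨P, hP, hrep⟩ := hM x
  obtain ⟨C, hC⟩ := hfb
  rw [hrep _ (hfm.const_mul c) ⟨‖c‖ * C, fun y => by
      rw [norm_mul]; exact mul_le_mul_of_nonneg_left (hC y) (norm_nonneg c)⟩,
    hrep f hfm ⟨C, hC⟩]
  exact integral_const_mul c f

lemma phi_conj {f : ↥U → ℂ} (hfm : Measurable f) (hfb : ∃ C, ∀ y, ‖f y‖ ≤ C) (x : ↥U) :
    Φ (fun y => (starRingEnd ℂ) (f y)) x = (starRingEnd ℂ) (Φ f x) := by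
  obtain ⟨P, hP, hrep⟩ := hM x
  have hconjm : Measurable fun y => (starRingEnd ℂ) (f y) :=
    (RCLike.continuous_conj (K := ℂ)).measurable.comp hfm
  rw [hrep _ hconjm (by
      obtain ⟨C, hC⟩ := hfb
      exact ⟨C, fun y => by simpa using hC y⟩),
    hrep f hfm hfb]
  exact integral_conj

lemma phi_im_zero {f : ↥U → ℂ} (hfm : Measurable f) (hfb : ∃ C, ∀ y, ‖f y‖ ≤ C)
    (him : ∀ y, (f y).im = 0) (x : ↥U) : (Φ f x).im = 0 := by
  obtain ⟨P, hP, hrep⟩ := hM x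
  rw [hrep f hfm hfb]
  have h1 : ∫ y, (f y).im ∂P = (∫ y, f y ∂P).im := by
    simpa using integral_im (𝕜 := ℂ) (integrable_of_bdd hfm hfb)
  rw [← h1]
  simp [him]

lemma phi_mono {f g : ↥U → ℂ} (hfm : Measurable f) (hfb : ∃ C, ∀ y, ‖f y‖ ≤ C)
    (hgm : Measurable g) (hgb : ∃ C, ∀ y, ‖g y‖ ≤ C)
    (hle : ∀ y, f y ≤ g y) (x : ↥U) : Φ f x ≤ Φ g x := by
  obtain ⟨P, hP, hrep⟩ := hM x
  rw [hrep f hfm hfb, hrep g hgm hgb]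
  have hif := integrable_of_bdd (P := P) hfm hfb
  have hig := integrable_of_bdd (P := P) hgm hgb
  rw [Complex.le_def]
  constructor
  · have h1 : ∫ y, (f y).re ∂P = (∫ y, f y ∂P).re := by
      simpa using integral_re (𝕜 := ℂ) hif
    have h2 : ∫ y, (g y).re ∂P = (∫ y, g y ∂P).re := by
      simpa using integral_re (𝕜 := ℂ) hig
    rw [← h1, ← h2]
    exact integral_mono hif.re hig.re fun y => (Complex.le_def.mp (hle y)).1
  · have h1 : ∫ y, (f y).im ∂P = (∫ y, f y ∂P).im := by
      simpa using integral_im (𝕜 := ℂ) hif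
    have h2 : ∫ y, (g y).im ∂P = (∫ y, g y ∂P).im := by
      simpa using integral_im (𝕜 := ℂ) hig
    rw [← h1, ← h2]
    exact integral_congr_ae (ae_of_all _ fun y => (Complex.le_def.mp (hle y)).2)

lemma phi_norm_le {f : ↥U → ℂ} (hfm : Measurable f) {C : ℝ} (hC : ∀ y, ‖f y‖ ≤ C)
    (x : ↥U) : ‖Φ f x‖ ≤ C := by
  obtain ⟨P, hP, hrep⟩ := hM x
  rw [hrep f hfm ⟨C, hC⟩]
  calc ‖∫ y, f y ∂P‖ ≤ ∫ y, ‖f y‖ ∂P := norm_integral_le_integral_norm f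
    _ ≤ ∫ _, C ∂P := integral_mono (integrable_of_bdd hfm ⟨C, hC⟩).norm
        (integrable_const C) hC
    _ = C := by simp [measure_univ]

/-- Cauchy-Schwarz / Jensen: `‖Φ f x‖² ≤ Φ(‖f‖²) x` -/
lemma phi_norm_sq {f : ↥U → ℂ} (hfm : Measurable f) (hfb : ∃ C, ∀ y, ‖f y‖ ≤ C)
    (x : ↥U) : (‖Φ f x‖ : ℂ)^2 ≤ Φ (fun y => (‖f y‖ : ℂ)^2) x := by
  obtain ⟨P, hP, hrep⟩ := hM x
  obtain ⟨C, hC⟩ := hfb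
  have hC0 : 0 ≤ C := le_trans (norm_nonneg _) (hC x)
  have hsqm : Measurable (fun y => (‖f y‖ : ℂ)^2) :=
    (Complex.measurable_ofReal.comp hfm.norm).pow_const 2
  have hsqb : ∃ D, ∀ y, ‖(‖f y‖ : ℂ)^2‖ ≤ D := by
    refine ⟨C^2, fun y => ?_⟩
    rw [← Complex.ofReal_pow, Complex.norm_real]
    rw [Real.norm_eq_abs, abs_of_nonneg (by positivity)]
    exact pow_le_pow_left₀ (norm_nonneg _) (hC y) 2
  rw [hrep f hfm ⟨C, hC⟩, hrep _ hsqm hsqb]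
  -- reduce to real statement
  have hkey : (∫ y, ‖f y‖ ∂P)^2 ≤ ∫ y, ‖f y‖^2 ∂P := by
    set g : ↥U → ℝ := fun y => ‖f y‖ with hg
    have hgm : Measurable g := hfm.norm
    have hig : Integrable g P := ⟨hgm.aestronglyMeasurable,
      HasFiniteIntegral.of_bounded (C := C) (ae_of_all _ fun y => by
        simpa [hg, abs_of_nonneg (norm_nonneg (f y))] using hC y)⟩
    have hig2 : Integrable (fun y => g y ^ 2) P := ⟨(hgm.pow_const 2).aestronglyMeasurable,
      HasFiniteIntegral.of_bounded (C := C^2) (ae_of_all _ fun y => by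
        have := hC y
        have h0 := norm_nonneg (f y)
        rw [Real.norm_eq_abs, abs_of_nonneg (by positivity)]
        exact pow_le_pow_left₀ h0 this 2)⟩
    set m : ℝ := ∫ y, g y ∂P with hm
    have hnn : 0 ≤ ∫ y, (g y - m)^2 ∂P := integral_nonneg fun y => sq_nonneg _
    have hexp : ∫ y, (g y - m)^2 ∂P = (∫ y, g y ^2 ∂P) - m^2 := by
      have : (fun y => (g y - m)^2) = fun y => g y^2 - (2*m) * g y + m^2 := by
        funext y; ring
      have hB : Integrable (fun y => 2*m*g y) P := hig.const_mul (2*m)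
      have hA : Integrable (fun y => g y^2 - 2*m*g y) P := hig2.sub hB
      rw [this, integral_add hA (integrable_const _),
        integral_sub hig2 hB, integral_const_mul, integral_const]
      simp only [probReal_univ, smul_eq_mul, one_mul, ← hm]
      ring
    nlinarith [hnn, hexp]
  calc (‖∫ y, f y ∂P‖ : ℂ)^2 ≤ ((∫ y, ‖f y‖ ∂P : ℝ) : ℂ)^2 := by
        rw [← Complex.ofReal_pow, ← Complex.ofReal_pow]
        rw [Complex.real_le_real]
        exact pow_le_pow_left₀ (norm_nonneg _) (norm_integral_le_integral_norm f) 2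
    _ ≤ ∫ y, (‖f y‖ : ℂ)^2 ∂P := by
        have : ∫ y, (‖f y‖ : ℂ)^2 ∂P = ((∫ y, ‖f y‖^2 ∂P : ℝ) : ℂ) := by
          rw [show (fun y => (‖f y‖ : ℂ)^2) = fun y => ((‖f y‖^2 : ℝ) : ℂ) from
            funext fun y => by push_cast; ring]
          exact integral_ofReal
        rw [this, ← Complex.ofReal_pow, Complex.real_le_real]
        exact hkey

end Markov

section Psi
lemma psiFun_apply_mem {f : K → ℂ} {x : K} (hx : x ∈ U) :
    psiFun U Φ f x = Φ (resU U f) ⟨x, hx⟩ := by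
  simp only [psiFun, resU, dif_pos hx]
  rfl

lemma psiFun_apply_not_mem {f : K → ℂ} {x : K} (hx : x ∉ U) : psiFun U Φ f x = f x := by
  simp only [psiFun, dif_neg hx]

lemma psiFun_iter_not_mem (f : K → ℂ) {x : K} (hx : x ∉ U) (n : ℕ) :
    (psiFun U Φ)^[n] f x = f x := by
  induction n with
  | zero => rfl
  | succ n ih => rw [Function.iterate_succ_apply', psiFun_apply_not_mem hx, ih]

lemma psiFun_continuousOn (hSF : HasStrongFeller Φ) {f : K → ℂ}
    (hfm : Measurable (resU U f)) (hfb : ∃ C, ∀ v, ‖resU U f v‖ ≤ C) :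
    ContinuousOn (psiFun U Φ f) U := by
  rw [continuousOn_iff_continuous_restrict]
  have : U.restrict (psiFun U Φ f) = Φ (resU U f) := funext fun v =>
    psiFun_apply_mem (Φ := Φ) (f := f) v.2
  rw [show U.domRestrict (psiFun U Φ f) = Φ (resU U f) from this]
  exact hSF _ hfm hfb

lemma psiFun_norm_le (hM : IsMarkovOperator Φ) {f : K → ℂ}
    (hfm : Measurable (resU U f)) {C : ℝ} (hC : ∀ y, ‖f y‖ ≤ C) :
    ∀ y, ‖psiFun U Φ f y‖ ≤ C := by
  intro y
  by_cases hy : y ∈ U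
  · rw [psiFun_apply_mem hy]
    exact phi_norm_le hM hfm (fun v => hC v.1) ⟨y, hy⟩
  · rw [psiFun_apply_not_mem hy]; exact hC y

/-- one-step preservation of a barrier bound -/
lemma barrier_step (hM : IsMarkovOperator Φ) {h : C(K, ℂ)}
    (hPhi : ∀ u : ↥U, h u.1 ≤ Φ (fun v : ↥U => h v.1) u)
    {c : ℂ} {ε Cb : ℝ} (hCb : 0 ≤ Cb)
    {g : K → ℂ} (hgm : Measurable (resU U g)) (hgb : ∃ C, ∀ v, ‖resU U g v‖ ≤ C)
    (hbound : ∀ y, ‖g y - c‖ ≤ ε - Cb * (h y).re) :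
    ∀ y, ‖psiFun U Φ g y - c‖ ≤ ε - Cb * (h y).re := by
  intro y
  by_cases hy : y ∈ U
  · rw [psiFun_apply_mem hy]
    set u : ↥U := ⟨y, hy⟩
    obtain ⟨P, hP, hrep⟩ := hM u
    have hgint : Integrable (resU U g) P := integrable_of_bdd hgm hgb
    have hhm : Measurable (resU U ⇑h) := resU_meas h.continuous
    have hhb : ∃ C, ∀ v, ‖resU U ⇑h v‖ ≤ C := resU_bdd h.continuous
    have hhint : Integrable (resU U ⇑h) P := integrable_of_bdd hhm hhb
    have hre_int' : Integrable (fun v : ↥U => (h v.1).re) P := hhint.re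
    have step1 : Φ (resU U g) u - c = ∫ v, (resU U g v - c) ∂P := by
      rw [hrep _ hgm hgb, integral_sub hgint (integrable_const c), integral_const]
      simp [measure_univ]
    have step2 : ‖∫ v, (resU U g v - c) ∂P‖ ≤ ∫ v, ‖resU U g v - c‖ ∂P :=
      norm_integral_le_integral_norm _
    have step3 : ∫ v, ‖resU U g v - c‖ ∂P ≤ ∫ v, (ε - Cb * ((h v.1).re)) ∂P := by
      refine integral_mono (hgint.sub (integrable_const c)).norm
        ((integrable_const ε).sub (hre_int'.const_mul Cb)) fun v => hbound v.1
    have hre_int : ∫ v, ((resU U ⇑h) v).re ∂P = (∫ v, resU U ⇑h v ∂P).re := by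
      simpa using integral_re (𝕜 := ℂ) hhint
    have step4 : ∫ v, (ε - Cb * ((h v.1).re)) ∂P
        = ε - Cb * (Φ (resU U ⇑h) u).re := by
      rw [integral_sub (integrable_const ε) (hre_int'.const_mul Cb),
        integral_const, integral_const_mul]
      have : ∫ v, ((h v.1) : ℂ).re ∂P = (Φ (resU U ⇑h) u).re := by
        rw [hrep _ hhm hhb]; exact hre_int
      rw [this]
      simp [measure_univ]
    have step5 : (h y).re ≤ (Φ (resU U ⇑h) u).re := by
      have := hPhi u
      exact (Complex.le_def.mp this).1
    calc ‖Φ (resU U g) u - c‖ = ‖∫ v, (resU U g v - c) ∂P‖ := by rw [step1]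
      _ ≤ ∫ v, ‖resU U g v - c‖ ∂P := step2
      _ ≤ ∫ v, (ε - Cb * ((h v.1).re)) ∂P := step3
      _ = ε - Cb * (Φ (resU U ⇑h) u).re := step4
      _ ≤ ε - Cb * (h y).re := by
          have := mul_le_mul_of_nonneg_left step5 hCb
          linarith
  · rw [psiFun_apply_not_mem hy]; exact hbound y

/-- construction of a barrier bound at a boundary point -/
lemma barrier_exists (hA : CondA U Φ) {x₀ : K} (hx₀ : x₀ ∈ Uᶜ) (f : K → ℂ)
    (hf : Continuous f) {ε : ℝ} (hε : 0 < ε) :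
    ∃ (Cb : ℝ) (h : C(K, ℂ)), 0 ≤ Cb ∧ h x₀ = 0 ∧
      (∀ u : ↥U, h u.1 ≤ Φ (fun v : ↥U => h v.1) u) ∧
      (∀ y, ‖f y - f x₀‖ ≤ ε - Cb * (h y).re) := by
  obtain ⟨h, h0, hneg, hPhi⟩ := hA x₀ hx₀
  have hre_le : ∀ y, (h y).re ≤ 0 := by
    intro y
    rcases eq_or_ne y x₀ with rfl | hy
    · rw [h0]; simp
    · exact le_of_lt (Complex.lt_def.mp (hneg y hy)).1
  set V : Set K := {y | ‖f y - f x₀‖ < ε} with hV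
  have hVopen : IsOpen V := isOpen_lt ((hf.sub continuous_const).norm) continuous_const
  have hx₀V : x₀ ∈ V := by simp [hV, hε]
  by_cases hne : Vᶜ.Nonempty
  · have hScpt : IsCompact Vᶜ := hVopen.isClosed_compl.isCompact
    have hcont_re : Continuous fun y => (h y).re := Complex.continuous_re.comp h.continuous
    obtain ⟨z, hzS, hzmax⟩ := hScpt.exists_isMaxOn hne hcont_re.continuousOn
    have hzmax' : ∀ y ∈ Vᶜ, (h y).re ≤ (h z).re := fun y hy => hzmax hy
    have hzne : z ≠ x₀ := fun hzx => hzS (hzx ▸ hx₀V)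
    have hδpos : 0 < -(h z).re := by
      have := (Complex.lt_def.mp (hneg z hzne)).1
      simpa using neg_pos.mpr this
    set δ : ℝ := -(h z).re with hδ
    obtain ⟨M, hMb⟩ := bdd_of_cont (fun y => f y - f x₀) (hf.sub continuous_const)
    have hM0 : 0 ≤ M := le_trans (norm_nonneg _) (hMb z)
    refine ⟨M / δ, h, div_nonneg hM0 (le_of_lt hδpos), h0, hPhi, fun y => ?_⟩
    by_cases hyV : y ∈ V
    · have h1 : ‖f y - f x₀‖ < ε := hyV
      have h2 : 0 ≤ -(M / δ * (h y).re) := by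
        have := hre_le y
        have := div_nonneg hM0 (le_of_lt hδpos)
        nlinarith
      linarith
    · have h1 : (h y).re ≤ -δ := by
        have := hzmax' y hyV
        simp only [hδ]; linarith
      have h2 : M / δ * δ = M := div_mul_cancel₀ M (ne_of_gt hδpos)
      have h3 : M / δ * (-(h y).re) ≥ M / δ * δ :=
        mul_le_mul_of_nonneg_left (by linarith) (div_nonneg hM0 (le_of_lt hδpos))
      have h4 : ‖f y - f x₀‖ ≤ M := hMb y
      nlinarith
  · -- Vᶜ empty : every point is in V
    rw [Set.not_nonempty_iff_eq_empty, ← Set.compl_univ, compl_inj_iff] at hne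
    refine ⟨0, h, le_refl 0, h0, hPhi, fun y => ?_⟩
    have : y ∈ V := hne ▸ Set.mem_univ y
    have h1 : ‖f y - f x₀‖ < ε := this
    simp only [zero_mul, sub_zero]
    linarith

end Psi

section Cont
variable (hUopen : IsOpen U) (hM : IsMarkovOperator Φ) (hSF : HasStrongFeller Φ)
  (hA : CondA U Φ)

include hUopen hM hSF hA in
lemma psi_continuous {f : K → ℂ} (hf : Continuous f) : Continuous (psiFun U Φ f) := by
  rw [continuous_iff_continuousAt]
  intro x
  by_cases hx : x ∈ U
  · exact (psiFun_continuousOn hSF (resU_meas hf) (resU_bdd hf)).continuousAt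
      (hUopen.mem_nhds hx)
  · rw [ContinuousAt, Metric.tendsto_nhds]
    intro ε hε
    obtain ⟨Cb, h, hCb, h0, hPhi, hbound⟩ := barrier_exists hA hx f hf (half_pos hε)
    have hb2 : ∀ y, ‖psiFun U Φ f y - f x‖ ≤ ε/2 - Cb * (h y).re :=
      barrier_step hM hPhi hCb (resU_meas hf) (resU_bdd hf) hbound
    have hcont : Tendsto (fun y => Cb * (h y).re) (𝓝 x) (𝓝 0) := by
      have h1 : Continuous fun y => Cb * (h y).re :=
        continuous_const.mul (Complex.continuous_re.comp h.continuous)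
      have := h1.tendsto x
      rwa [h0, Complex.zero_re, mul_zero] at this
    have hev : ∀ᶠ y in 𝓝 x, -(ε/2) < Cb * (h y).re :=
      hcont (Ioi_mem_nhds (by linarith))
    filter_upwards [hev] with y hy
    have hxval : psiFun U Φ f x = f x := psiFun_apply_not_mem hx
    rw [dist_eq_norm, hxval]
    calc ‖psiFun U Φ f y - f x‖ ≤ ε/2 - Cb * (h y).re := hb2 y
      _ < ε/2 + ε/2 := by linarith
      _ = ε := by ring

include hUopen hM hSF hA in
lemma psi_iter_continuous {f : K → ℂ} (hf : Continuous f) (n : ℕ) :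
    Continuous ((psiFun U Φ)^[n] f) := by
  induction n with
  | zero => exact hf
  | succ n ih =>
    rw [Function.iterate_succ_apply']
    exact psi_continuous hUopen hM hSF hA ih

include hUopen hM hSF hA in
lemma iter_barrier {h : C(K, ℂ)}
    (hPhi : ∀ u : ↥U, h u.1 ≤ Φ (fun v : ↥U => h v.1) u)
    {c : ℂ} {ε Cb : ℝ} (hCb : 0 ≤ Cb)
    {f : K → ℂ} (hf : Continuous f)
    (hbound : ∀ y, ‖f y - c‖ ≤ ε - Cb * (h y).re) :
    ∀ n y, ‖(psiFun U Φ)^[n] f y - c‖ ≤ ε - Cb * (h y).re := by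
  intro n
  induction n with
  | zero => exact hbound
  | succ n ih =>
    intro y
    rw [Function.iterate_succ_apply']
    have hcont := psi_iter_continuous hUopen hM hSF hA hf n
    exact barrier_step hM hPhi hCb (resU_meas hcont) (resU_bdd hcont) ih y

include hM in
lemma psi_mono {f g : K → ℂ} (hf : Continuous f) (hg : Continuous g)
    (hle : ∀ y, f y ≤ g y) : ∀ y, psiFun U Φ f y ≤ psiFun U Φ g y := by
  intro y
  by_cases hy : y ∈ U
  · rw [psiFun_apply_mem hy, psiFun_apply_mem hy]
    exact phi_mono hM (resU_meas hf) (resU_bdd hf) (resU_meas hg) (resU_bdd hg)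
      (fun v => hle v.1) ⟨y, hy⟩
  · rw [psiFun_apply_not_mem hy, psiFun_apply_not_mem hy]; exact hle y

include hM in
lemma psi_im_zero {f : K → ℂ} (hf : Continuous f) (him : ∀ y, (f y).im = 0) :
    ∀ y, (psiFun U Φ f y).im = 0 := by
  intro y
  by_cases hy : y ∈ U
  · rw [psiFun_apply_mem hy]
    exact phi_im_zero hM (resU_meas hf) (resU_bdd hf) (fun v => him v.1) ⟨y, hy⟩
  · rw [psiFun_apply_not_mem hy]; exact him y

include hM in
lemma psi_step_sq {w : K → ℂ} (hw : Continuous w) (hfix : psiFun U Φ w = w) :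
    ∀ y, (fun y => (‖w y‖ : ℂ)^2) y ≤ psiFun U Φ (fun y => (‖w y‖ : ℂ)^2) y := by
  intro y
  set s : K → ℂ := fun y => (‖w y‖ : ℂ)^2 with hs
  have hscont : Continuous s := by
    have : Continuous fun y => ((‖w y‖^2 : ℝ) : ℂ) :=
      Complex.continuous_ofReal.comp ((hw.norm).pow 2)
    simpa [hs, Complex.ofReal_pow] using this
  by_cases hy : y ∈ U
  · rw [psiFun_apply_mem hy]
    have hwy : w y = Φ (resU U w) ⟨y, hy⟩ := by
      rw [← psiFun_apply_mem (Φ := Φ) (f := w) hy, hfix]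
    have hcs := phi_norm_sq hM (resU_meas hw) (resU_bdd hw) ⟨y, hy⟩
    have heq : (fun v : ↥U => (‖resU U w v‖ : ℂ)^2) = resU U s := rfl
    rw [heq] at hcs
    calc s y = (‖Φ (resU U w) ⟨y, hy⟩‖ : ℂ)^2 := by rw [hs]; simp [hwy]
      _ ≤ Φ (resU U s) ⟨y, hy⟩ := hcs
  · rw [psiFun_apply_not_mem hy]

end Cont

/-- Dini's theorem on a compact space -/
lemma dini {u : ℕ → K → ℝ} {g : K → ℝ} (hu : ∀ n, Continuous (u n))
    (hg : Continuous g) (hmono : ∀ n x, u n x ≤ u (n+1) x)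
    (hlim : ∀ x, Tendsto (fun n => u n x) atTop (𝓝 (g x))) :
    TendstoUniformly u g atTop := by
  have hmono' : ∀ x, Monotone fun n => u n x := fun x =>
    monotone_nat_of_le_succ fun n => hmono n x
  have hle : ∀ n x, u n x ≤ g x := fun n x => (hmono' x).ge_of_tendsto (hlim x) n
  rw [Metric.tendstoUniformly_iff]
  intro ε hε
  set E : ℕ → Set K := fun n => {x | g x - u n x < ε} with hE
  have hEopen : ∀ n, IsOpen (E n) := fun n =>
    isOpen_lt (hg.sub (hu n)) continuous_const
  have hEmono : Monotone E := by
    intro m n hmn x hx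
    have : u m x ≤ u n x := hmono' x hmn
    simp only [hE, Set.mem_setOf_eq] at hx ⊢
    linarith
  have hcover : Set.univ ⊆ ⋃ n, E n := by
    intro x _
    have := (hlim x).eventually (eventually_gt_nhds (by linarith : g x - ε < g x))
    obtain ⟨n, hn⟩ := this.exists
    exact Set.mem_iUnion.mpr ⟨n, by simp [hE]; linarith⟩
  obtain ⟨N, hN⟩ := isCompact_univ.elim_directed_cover E hEopen hcover
    (hEmono.directed_le)
  rw [eventually_atTop]
  refine ⟨N, fun n hn x => ?_⟩
  have hx : x ∈ E N := hN (Set.mem_univ x)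
  have h1 : g x - u N x < ε := hx
  have h2 : u N x ≤ u n x := hmono' x hn
  have h3 : u n x ≤ g x := hle n x
  rw [Real.dist_eq, abs_of_nonneg (by linarith)]
  linarith

lemma main_sq (hUopen : IsOpen U) (hM : IsMarkovOperator Φ) (hSF : HasStrongFeller Φ)
    (hA : CondA U Φ) {w : K → ℂ} (hw : Continuous w) (hfix : psiFun U Φ w = w) :
    ∃ p : K → ℂ,
      TendstoUniformly (fun n x => (psiFun U Φ)^[n] (fun y => (‖w y‖ : ℂ)^2) x) p atTop := by
  set s : K → ℂ := fun y => (‖w y‖ : ℂ)^2 with hs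
  have hscont : Continuous s := by
    have : Continuous fun y => ((‖w y‖^2 : ℝ) : ℂ) :=
      Complex.continuous_ofReal.comp ((hw.norm).pow 2)
    simpa [hs, Complex.ofReal_pow] using this
  set F : ℕ → K → ℂ := fun n => (psiFun U Φ)^[n] s with hF
  have hFcont : ∀ n, Continuous (F n) := psi_iter_continuous hUopen hM hSF hA hscont
  have hsim : ∀ y, (s y).im = 0 := fun y => by simp [hs, ← Complex.ofReal_pow]
  have hFim : ∀ n y, (F n y).im = 0 := by
    intro n
    induction n with
    | zero => exact hsim
    | succ n ih =>
      intro y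
      rw [show F (n+1) = psiFun U Φ (F n) from Function.iterate_succ_apply' _ n s]
      exact psi_im_zero hM (hFcont n) ih y
  have hFmono : ∀ n y, F n y ≤ F (n+1) y := by
    intro n
    induction n with
    | zero =>
      intro y
      simpa [hF] using psi_step_sq hM hw hfix y
    | succ n ih =>
      intro y
      have h1 : F (n+1) = psiFun U Φ (F n) := Function.iterate_succ_apply' _ n s
      have h2 : F (n+2) = psiFun U Φ (F (n+1)) := Function.iterate_succ_apply' _ (n+1) s
      rw [h1, h2]
      exact psi_mono hM (hFcont n) (hFcont (n+1)) ih y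
  obtain ⟨Ms, hMs⟩ := bdd_of_cont s hscont
  have hFbdd : ∀ n y, ‖F n y‖ ≤ Ms := by
    intro n
    induction n with
    | zero => exact hMs
    | succ n ih =>
      have h1 : F (n+1) = psiFun U Φ (F n) := Function.iterate_succ_apply' _ n s
      rw [h1]
      exact psiFun_norm_le hM (resU_meas (hFcont n)) ih
  set u : ℕ → K → ℝ := fun n x => (F n x).re with hu
  have hucont : ∀ n, Continuous (u n) := fun n => Complex.continuous_re.comp (hFcont n)
  have humono : ∀ x, Monotone fun n => u n x := fun x =>
    monotone_nat_of_le_succ fun n => (Complex.le_def.mp (hFmono n x)).1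
  have huabs : ∀ n x, |u n x| ≤ Ms := fun n x =>
    le_trans (Complex.abs_re_le_norm (F n x)) (by exact hFbdd n x)
  have hconv : ∀ x, ∃ L, Tendsto (fun n => u n x) atTop (𝓝 L) := by
    intro x
    refine ⟨_, tendsto_atTop_ciSup (humono x) ⟨Ms, ?_⟩⟩
    rintro r ⟨n, rfl⟩
    exact le_trans (le_abs_self _) (huabs n x)
  choose gR hgR using hconv
  set g : K → ℂ := fun x => ((gR x : ℝ) : ℂ) with hg
  have hFeq : ∀ n x, F n x = ((u n x : ℝ) : ℂ) := by
    intro n x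
    apply Complex.ext
    · simp [hu]
    · simp [hFim n x]
  have hFtend : ∀ x, Tendsto (fun n => F n x) atTop (𝓝 (g x)) := by
    intro x
    have h1 : Tendsto (fun n => ((u n x : ℝ) : ℂ)) atTop (𝓝 ((gR x : ℝ) : ℂ)) :=
      (Complex.continuous_ofReal.tendsto _).comp (hgR x)
    simpa [← hFeq] using h1
  have hresmeas : Measurable (resU U g) := by
    have hm : ∀ n, Measurable (fun v : ↥U => F n v.1) := fun n =>
      (hFcont n).measurable.comp measurable_subtype_coe
    refine measurable_of_tendsto_metrizable' atTop hm ?_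
    rw [tendsto_pi_nhds]
    intro v
    exact hFtend v.1
  have hgnorm : ∀ x, ‖g x‖ ≤ Ms := by
    intro x
    have h1 : gR x ≤ Ms := le_of_tendsto (hgR x)
      (Eventually.of_forall fun n => le_trans (le_abs_self _) (huabs n x))
    have h2 : -Ms ≤ gR x := ge_of_tendsto (hgR x)
      (Eventually.of_forall fun n => neg_le_of_abs_le (huabs n x))
    rw [hg]
    rw [Complex.norm_real, Real.norm_eq_abs, abs_le]
    exact ⟨h2, h1⟩
  have hgbdd : ∃ C, ∀ v : ↥U, ‖resU U g v‖ ≤ C := ⟨Ms, fun v => hgnorm v.1⟩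
  have hgU : ∀ (x : K) (hx : x ∈ U), Φ (resU U g) ⟨x, hx⟩ = g x := by
    intro x hx
    obtain ⟨P, hP, hrep⟩ := hM ⟨x, hx⟩
    rw [hrep _ hresmeas hgbdd]
    have h1 : Tendsto (fun n => ∫ v, (fun v : ↥U => F n v.1) v ∂P) atTop
        (𝓝 (∫ v, resU U g v ∂P)) := by
      refine tendsto_integral_of_dominated_convergence (fun _ => Ms)
        (fun n => ((hFcont n).measurable.comp measurable_subtype_coe).aestronglyMeasurable)
        (integrable_const Ms)
        (fun n => ae_of_all _ fun v => hFbdd n v.1)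
        (ae_of_all _ fun v => hFtend v.1)
    have h2 : ∀ n, ∫ v, (fun v : ↥U => F n v.1) v ∂P = F (n+1) x := by
      intro n
      have e1 : ∫ v, (fun v : ↥U => F n v.1) v ∂P = Φ (resU U (F n)) ⟨x, hx⟩ :=
        (hrep _ (resU_meas (hFcont n)) (resU_bdd (hFcont n))).symm
      rw [e1, ← psiFun_apply_mem (Φ := Φ) (f := F n) hx]
      exact congrFun (Function.iterate_succ_apply' (psiFun U Φ) n s).symm x
    have h3 : Tendsto (fun n => F (n+1) x) atTop (𝓝 (g x)) :=
      (hFtend x).comp (tendsto_add_atTop_nat 1)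
    rw [show (fun n => ∫ v, (fun v : ↥U => F n v.1) v ∂P) = fun n => F (n+1) x from
      funext h2] at h1
    exact tendsto_nhds_unique h1 h3
  have hgcont : Continuous g := by
    rw [continuous_iff_continuousAt]
    intro x
    by_cases hx : x ∈ U
    · have hco : ContinuousOn g U := by
        rw [continuousOn_iff_continuous_restrict]
        have : U.restrict g = Φ (resU U g) := funext fun v => (hgU v.1 v.2).symm
        rw [show U.domRestrict g = Φ (resU U g) from this]
        exact hSF _ hresmeas hgbdd
      exact hco.continuousAt (hUopen.mem_nhds hx)
    · rw [ContinuousAt, Metric.tendsto_nhds]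
      intro ε hε
      obtain ⟨Cb, h, hCb, h0, hPhi, hbound⟩ := barrier_exists hA hx s hscont
        (by positivity : (0:ℝ) < ε/4)
      have hib := iter_barrier hUopen hM hSF hA hPhi hCb hscont hbound
      have hgb : ∀ y, ‖g y - s x‖ ≤ ε/4 - Cb * (h y).re := by
        intro y
        have htd : Tendsto (fun n => ‖F n y - s x‖) atTop (𝓝 ‖g y - s x‖) :=
          ((continuous_norm.comp (continuous_id.sub continuous_const)).tendsto _).comp
            (hFtend y)
        exact le_of_tendsto htd (Eventually.of_forall fun n => hib n y)
      have hgx : g x = s x := by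
        have h1 : ∀ n, F n x = s x := fun n => psiFun_iter_not_mem s hx n
        have h2 : Tendsto (fun n => F n x) atTop (𝓝 (s x)) := by
          rw [show (fun n => F n x) = fun _ => s x from funext h1]
          exact tendsto_const_nhds
        exact tendsto_nhds_unique (hFtend x) h2
      have hcont2 : Tendsto (fun y => Cb * (h y).re) (𝓝 x) (𝓝 0) := by
        have h1 : Continuous fun y => Cb * (h y).re :=
          continuous_const.mul (Complex.continuous_re.comp h.continuous)
        have := h1.tendsto x
        rwa [h0, Complex.zero_re, mul_zero] at this
      have hev : ∀ᶠ y in 𝓝 x, -(ε/2) < Cb * (h y).re :=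
        hcont2 (Ioi_mem_nhds (by linarith))
      filter_upwards [hev] with y hy
      rw [dist_eq_norm, hgx]
      calc ‖g y - s x‖ ≤ ε/4 - Cb * (h y).re := hgb y
        _ < ε/4 + ε/2 := by linarith
        _ < ε := by linarith
  have hgRcont : Continuous gR := by
    have : gR = fun x => (g x).re := funext fun x => by simp [hg]
    rw [this]
    exact Complex.continuous_re.comp hgcont
  have hdini := dini hucont hgRcont (fun n x => humono x (Nat.le_succ n)) hgR
  refine ⟨g, ?_⟩
  rw [Metric.tendstoUniformly_iff] at hdini ⊢
  intro ε hε
  filter_upwards [hdini ε hε] with n hn x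
  have h1 := hn x
  have h2 : dist (g x) (F n x) = dist (gR x) (u n x) := by
    rw [hg, hFeq n x, Complex.dist_eq, ← Complex.ofReal_sub, Complex.norm_real, Real.norm_eq_abs,
      Real.dist_eq]
  rw [h2]
  exact h1

lemma bdd_mul {f : ↥U → ℂ} (c : ℂ) (hb : ∃ C, ∀ v, ‖f v‖ ≤ C) :
    ∃ C, ∀ v : ↥U, ‖c * f v‖ ≤ C := by
  obtain ⟨C, hC⟩ := hb
  exact ⟨‖c‖ * C, fun v => by
    rw [norm_mul]; exact mul_le_mul_of_nonneg_left (hC v) (norm_nonneg c)⟩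

lemma psi_comb2 (hM : IsMarkovOperator Φ) {f g : K → ℂ} (hf : Continuous f)
    (hg : Continuous g) (a b : ℂ) :
    psiFun U Φ (fun y => a * f y + b * g y)
      = fun y => a * psiFun U Φ f y + b * psiFun U Φ g y := by
  funext y
  by_cases hy : y ∈ U
  · rw [psiFun_apply_mem hy, psiFun_apply_mem (Φ := Φ) (f := f) hy,
      psiFun_apply_mem (Φ := Φ) (f := g) hy]
    have h1 : Φ (fun v : ↥U => a * resU U f v + b * resU U g v) ⟨y, hy⟩
        = Φ (fun v => a * resU U f v) ⟨y, hy⟩ + Φ (fun v => b * resU U g v) ⟨y, hy⟩ :=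
      phi_add hM ((resU_meas hf).const_mul a) (bdd_mul a (resU_bdd hf))
        ((resU_meas hg).const_mul b) (bdd_mul b (resU_bdd hg)) ⟨y, hy⟩
    have h2 : Φ (fun v : ↥U => a * resU U f v) ⟨y, hy⟩ = a * Φ (resU U f) ⟨y, hy⟩ :=
      phi_mul hM a (resU_meas hf) (resU_bdd hf) ⟨y, hy⟩
    have h3 : Φ (fun v : ↥U => b * resU U g v) ⟨y, hy⟩ = b * Φ (resU U g) ⟨y, hy⟩ :=
      phi_mul hM b (resU_meas hg) (resU_bdd hg) ⟨y, hy⟩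
    exact h1.trans (by rw [h2, h3])
  · rw [psiFun_apply_not_mem hy, psiFun_apply_not_mem (Φ := Φ) (f := f) hy,
      psiFun_apply_not_mem (Φ := Φ) (f := g) hy]

lemma psi_conj_fix (hM : IsMarkovOperator Φ) {f : K → ℂ} (hf : Continuous f)
    (hfix : psiFun U Φ f = f) :
    psiFun U Φ (fun y => (starRingEnd ℂ) (f y)) = fun y => (starRingEnd ℂ) (f y) := by
  funext y
  by_cases hy : y ∈ U
  · rw [psiFun_apply_mem hy]
    have h1 : Φ (fun v : ↥U => (starRingEnd ℂ) (resU U f v)) ⟨y, hy⟩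
        = (starRingEnd ℂ) (Φ (resU U f) ⟨y, hy⟩) :=
      phi_conj hM (resU_meas hf) (resU_bdd hf) ⟨y, hy⟩
    calc Φ (resU U fun y => (starRingEnd ℂ) (f y)) ⟨y, hy⟩
        = (starRingEnd ℂ) (Φ (resU U f) ⟨y, hy⟩) := h1
      _ = (starRingEnd ℂ) (f y) := by
          rw [← psiFun_apply_mem (Φ := Φ) (f := f) hy, hfix]
  · rw [psiFun_apply_not_mem hy]

lemma psi_iter_comb2 (hUopen : IsOpen U) (hM : IsMarkovOperator Φ)
    (hSF : HasStrongFeller Φ) (hA : CondA U Φ) {f g : K → ℂ} (hf : Continuous f)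
    (hg : Continuous g) (a b : ℂ) (n : ℕ) :
    (psiFun U Φ)^[n] (fun y => a * f y + b * g y)
      = fun y => a * (psiFun U Φ)^[n] f y + b * (psiFun U Φ)^[n] g y := by
  induction n with
  | zero => rfl
  | succ n ih =>
    rw [Function.iterate_succ_apply' (psiFun U Φ) n, ih,
      psi_comb2 hM (psi_iter_continuous hUopen hM hSF hA hf n)
        (psi_iter_continuous hUopen hM hSF hA hg n) a b,
      Function.iterate_succ_apply' (psiFun U Φ) n f,
      Function.iterate_succ_apply' (psiFun U Φ) n g]
end Aux

/-- If `h₁, h₂ ∈ C(K)` are fixed by `Ψ`, then `{Ψⁿ (h₁ h₂)}`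
converges uniformly on `K`. -/
theorem stmt9 {K : Type*} [MetricSpace K] [CompactSpace K]
    [MeasurableSpace K] [BorelSpace K]
    (U : Set K) (hUopen : IsOpen U) (hUdense : Dense U)
    (hbd : ∃ a b : K, a ∈ Uᶜ ∧ b ∈ Uᶜ ∧ a ≠ b)
    (Φ : (↥U → ℂ) → (↥U → ℂ))
    (hM : IsMarkovOperator Φ) (hSF : HasStrongFeller Φ)
    (hA : CondA U Φ)
    (h₁ h₂ : C(K, ℂ))
    (hfix₁ : psiFun U Φ ⇑h₁ = ⇑h₁) (hfix₂ : psiFun U Φ ⇑h₂ = ⇑h₂) :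
    ∃ p : K → ℂ,
      TendstoUniformly (fun n x => (psiFun U Φ)^[n] (fun y => h₁ y * h₂ y) x)
        p atTop := by
  have hbcont : Continuous fun y => (starRingEnd ℂ) (h₂ y) :=
    (RCLike.continuous_conj (K := ℂ)).comp h₂.continuous
  have hbfix : psiFun U Φ (fun y => (starRingEnd ℂ) (h₂ y))
      = fun y => (starRingEnd ℂ) (h₂ y) :=
    psi_conj_fix hM h₂.continuous hfix₂
  -- the four fixed continuous functions
  have mkcont : ∀ c : ℂ, Continuous fun y => h₁ y + c * (starRingEnd ℂ) (h₂ y) :=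
    fun c => h₁.continuous.add (continuous_const.mul hbcont)
  have mkfix : ∀ c : ℂ, psiFun U Φ (fun y => h₁ y + c * (starRingEnd ℂ) (h₂ y))
      = fun y => h₁ y + c * (starRingEnd ℂ) (h₂ y) := by
    intro c
    have h := psi_comb2 hM h₁.continuous hbcont 1 c
    rw [hfix₁, hbfix] at h
    simpa only [one_mul] using h
  obtain ⟨p1, T1⟩ := main_sq hUopen hM hSF hA (mkcont 1) (mkfix 1)
  obtain ⟨p2, T2⟩ := main_sq hUopen hM hSF hA (mkcont (-1)) (mkfix (-1))
  obtain ⟨p3, T3⟩ := main_sq hUopen hM hSF hA (mkcont Complex.I) (mkfix Complex.I)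
  obtain ⟨p4, T4⟩ := main_sq hUopen hM hSF hA (mkcont (-Complex.I)) (mkfix (-Complex.I))
  -- canonical names for the four squares
  set S1 : K → ℂ := fun y => (‖h₁ y + 1 * (starRingEnd ℂ) (h₂ y)‖ : ℂ)^2 with hS1
  set S2 : K → ℂ := fun y => (‖h₁ y + (-1) * (starRingEnd ℂ) (h₂ y)‖ : ℂ)^2 with hS2
  set S3 : K → ℂ := fun y => (‖h₁ y + Complex.I * (starRingEnd ℂ) (h₂ y)‖ : ℂ)^2 with hS3
  set S4 : K → ℂ := fun y => (‖h₁ y + (-Complex.I) * (starRingEnd ℂ) (h₂ y)‖ : ℂ)^2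
    with hS4
  have T1' : TendstoUniformly (fun n x => (psiFun U Φ)^[n] S1 x) p1 atTop := T1
  have T2' : TendstoUniformly (fun n x => (psiFun U Φ)^[n] S2 x) p2 atTop := T2
  have T3' : TendstoUniformly (fun n x => (psiFun U Φ)^[n] S3 x) p3 atTop := T3
  have T4' : TendstoUniformly (fun n x => (psiFun U Φ)^[n] S4 x) p4 atTop := T4
  have hScont : ∀ c : ℂ,
      Continuous fun y => (‖h₁ y + c * (starRingEnd ℂ) (h₂ y)‖ : ℂ)^2 := by
    intro c
    have : Continuous fun y => ((‖h₁ y + c * (starRingEnd ℂ) (h₂ y)‖^2 : ℝ) : ℂ) :=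
      Complex.continuous_ofReal.comp (((mkcont c).norm).pow 2)
    simpa [Complex.ofReal_pow] using this
  have hS1c : Continuous S1 := hScont 1
  have hS2c : Continuous S2 := hScont (-1)
  have hS3c : Continuous S3 := hScont Complex.I
  have hS4c : Continuous S4 := hScont (-Complex.I)
  -- nested combination
  set t1 : K → ℂ := fun y => Complex.I * S3 y + (-Complex.I) * S4 y with ht1
  set t2 : K → ℂ := fun y => (-1 : ℂ) * S2 y + (1 : ℂ) * t1 y with ht2
  have ht1c : Continuous t1 := (continuous_const.mul hS3c).add (continuous_const.mul hS4c)
  have ht2c : Continuous t2 := (continuous_const.mul hS2c).add (continuous_const.mul ht1c)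
  -- polarization identity
  have hq : (fun y => h₁ y * h₂ y)
      = fun y => (1/4 : ℂ) * S1 y + (1/4 : ℂ) * t2 y := by
    funext y
    have hn : ∀ z : ℂ, ((‖z‖ : ℂ))^2 = z * (starRingEnd ℂ) z := fun z => by
      rw [← Complex.ofReal_pow, Complex.sq_norm, Complex.mul_conj]
    simp only [ht2, ht1, hS1, hS2, hS3, hS4, hn, map_add, map_mul, Complex.conj_conj,
      Complex.conj_I, map_one, map_neg]
    ring_nf
    simp only [Complex.I_sq]
    ring
  have hi1 : ∀ n, (psiFun U Φ)^[n] t1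
      = fun y => Complex.I * (psiFun U Φ)^[n] S3 y
        + (-Complex.I) * (psiFun U Φ)^[n] S4 y := fun n =>
    psi_iter_comb2 hUopen hM hSF hA hS3c hS4c Complex.I (-Complex.I) n
  have hi2 : ∀ n, (psiFun U Φ)^[n] t2
      = fun y => (-1 : ℂ) * (psiFun U Φ)^[n] S2 y
        + (1 : ℂ) * (psiFun U Φ)^[n] t1 y := fun n =>
    psi_iter_comb2 hUopen hM hSF hA hS2c ht1c (-1) 1 n
  have hi3 : ∀ n, (psiFun U Φ)^[n] (fun y => (1/4 : ℂ) * S1 y + (1/4 : ℂ) * t2 y)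
      = fun y => (1/4 : ℂ) * (psiFun U Φ)^[n] S1 y
        + (1/4 : ℂ) * (psiFun U Φ)^[n] t2 y := fun n =>
    psi_iter_comb2 hUopen hM hSF hA hS1c ht2c (1/4) (1/4) n
  -- the limit
  refine ⟨fun x => (1/4 : ℂ) * p1 x + (1/4 : ℂ) * ((-1 : ℂ) * p2 x
    + (1 : ℂ) * (Complex.I * p3 x + (-Complex.I) * p4 x)), ?_⟩
  rw [Metric.tendstoUniformly_iff] at T1' T2' T3' T4' ⊢
  intro ε hε
  filter_upwards [T1' ε hε, T2' ε hε, T3' ε hε, T4' ε hε] with n e1 e2 e3 e4 x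
  have d1 := e1 x
  have d2 := e2 x
  have d3 := e3 x
  have d4 := e4 x
  have hval : (psiFun U Φ)^[n] (fun y => h₁ y * h₂ y) x
      = (1/4 : ℂ) * (psiFun U Φ)^[n] S1 x + (1/4 : ℂ) * ((-1 : ℂ) * (psiFun U Φ)^[n] S2 x
        + (1 : ℂ) * (Complex.I * (psiFun U Φ)^[n] S3 x
          + (-Complex.I) * (psiFun U Φ)^[n] S4 x)) := by
    rw [hq]
    have e3' := congrFun (hi3 n) x
    have e2' := congrFun (hi2 n) x
    have e1' := congrFun (hi1 n) x
    rw [e3', e2', e1']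
  rw [dist_eq_norm, hval]
  have hc14 : ‖(1/4 : ℂ)‖ = 1/4 := by
    rw [show (1/4 : ℂ) = ((1/4 : ℝ) : ℂ) by norm_num, Complex.norm_real]
    norm_num
  have hcI : ‖Complex.I‖ = 1 := by
    rw [Complex.norm_I]
  set A1 := p1 x - (psiFun U Φ)^[n] S1 x with hA1
  set A2 := p2 x - (psiFun U Φ)^[n] S2 x with hA2
  set A3 := p3 x - (psiFun U Φ)^[n] S3 x with hA3
  set A4 := p4 x - (psiFun U Φ)^[n] S4 x with hA4
  have heqd : (fun x => (1/4 : ℂ) * p1 x + (1/4 : ℂ) * ((-1 : ℂ) * p2 x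
        + (1 : ℂ) * (Complex.I * p3 x + (-Complex.I) * p4 x))) x
      - ((1/4 : ℂ) * (psiFun U Φ)^[n] S1 x + (1/4 : ℂ) * ((-1 : ℂ) * (psiFun U Φ)^[n] S2 x
        + (1 : ℂ) * (Complex.I * (psiFun U Φ)^[n] S3 x
          + (-Complex.I) * (psiFun U Φ)^[n] S4 x)))
      = (1/4 : ℂ) * A1 + ((1/4 : ℂ) * (-1 : ℂ) * A2
        + ((1/4 : ℂ) * Complex.I * A3 + (1/4 : ℂ) * (-Complex.I) * A4)) := by
    rw [hA1, hA2, hA3, hA4]; ring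
  rw [heqd]
  have hd1 : ‖A1‖ < ε := by rw [hA1, ← dist_eq_norm]; exact d1
  have hd2 : ‖A2‖ < ε := by rw [hA2, ← dist_eq_norm]; exact d2
  have hd3 : ‖A3‖ < ε := by rw [hA3, ← dist_eq_norm]; exact d3
  have hd4 : ‖A4‖ < ε := by rw [hA4, ← dist_eq_norm]; exact d4
  have hb1 : ‖(1/4 : ℂ) * A1‖ = 1/4 * ‖A1‖ := by rw [norm_mul, hc14]
  have hb2 : ‖(1/4 : ℂ) * (-1 : ℂ) * A2‖ = 1/4 * ‖A2‖ := by
    rw [norm_mul, norm_mul, hc14, norm_neg, norm_one, mul_one]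
  have hb3 : ‖(1/4 : ℂ) * Complex.I * A3‖ = 1/4 * ‖A3‖ := by
    rw [norm_mul, norm_mul, hc14, hcI, mul_one]
  have hb4 : ‖(1/4 : ℂ) * (-Complex.I) * A4‖ = 1/4 * ‖A4‖ := by
    rw [norm_mul, norm_mul, hc14, norm_neg, hcI, mul_one]
  calc ‖(1/4 : ℂ) * A1 + ((1/4 : ℂ) * (-1 : ℂ) * A2
        + ((1/4 : ℂ) * Complex.I * A3 + (1/4 : ℂ) * (-Complex.I) * A4))‖
      ≤ ‖(1/4 : ℂ) * A1‖ + (‖(1/4 : ℂ) * (-1 : ℂ) * A2‖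
        + (‖(1/4 : ℂ) * Complex.I * A3‖ + ‖(1/4 : ℂ) * (-Complex.I) * A4‖)) := by
        refine (norm_add_le _ _).trans ?_
        refine add_le_add le_rfl ((norm_add_le _ _).trans ?_)
        exact add_le_add le_rfl (norm_add_le _ _)
    _ = 1/4 * ‖A1‖ + (1/4 * ‖A2‖ + (1/4 * ‖A3‖ + 1/4 * ‖A4‖)) := by
        rw [hb1, hb2, hb3, hb4]
    _ < ε := by linarith
end

section
/- For each x ∈ ∂U there exists g ∈ C(K) such that g(x) = 0, g(y) < 0 for every y ∈ ∂U \ {x}, and Φ(g_U) = g_U on U. -/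
open MeasureTheory Filter Topology ComplexOrder

lemma barrier_dom {K : Type*} [TopologicalSpace K] [CompactSpace K]
    (hr q : K → ℝ) (hhr : Continuous hr) (hq : Continuous q)
    (y : K) (hqy : q y = 0) (hqneg : ∀ k, k ≠ y → q k < 0)
    (B : ℝ) (hB : ∀ k, hr k ≤ B)
    (ε : ℝ) (hε : 0 < ε) :
    ∃ C : ℝ, 0 ≤ C ∧ ∀ k, hr k ≤ hr y + ε - C * q k := by
  set S := {k : K | hr y + ε ≤ hr k} with hSdef
  by_cases hS : S.Nonempty
  · have hScl : IsClosed S := isClosed_le continuous_const hhr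
    have hScp : IsCompact S := hScl.isCompact
    obtain ⟨k₀, hk₀S, hk₀⟩ := hScp.exists_isMinOn hS (hq.neg.continuousOn)
    have hk₀y : k₀ ≠ y := by
      intro hh
      have : hr y + ε ≤ hr k₀ := hk₀S
      rw [hh] at this; linarith
    have hδ : 0 < -q k₀ := by have := hqneg k₀ hk₀y; linarith
    refine ⟨max 0 ((B - hr y - ε) / (-q k₀)), le_max_left _ _, fun k => ?_⟩
    by_cases hk : k ∈ S
    · have h1 : -q k₀ ≤ -q k := hk₀ hk
      have h2 : (B - hr y - ε) / (-q k₀) ≤ max 0 ((B - hr y - ε) / (-q k₀)) := le_max_right _ _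
      have h3 : (B - hr y - ε) / (-q k₀) * (-q k₀) = B - hr y - ε := div_mul_cancel₀ _ hδ.ne'
      have h4 : 0 ≤ max 0 ((B - hr y - ε) / (-q k₀)) := le_max_left _ _
      nlinarith [hB k]
    · have h1 : hr k < hr y + ε := lt_of_not_ge hk
      have hqk : q k ≤ 0 := by
        by_cases hky : k = y
        · rw [hky, hqy]
        · exact (hqneg k hky).le
      nlinarith [le_max_left 0 ((B - hr y - ε) / (-q k₀))]
  · exact ⟨0, le_refl 0, fun k => by
      have : ¬ (hr y + ε ≤ hr k) := fun hh => hS ⟨k, hh⟩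
      linarith⟩

/-- For each `x ∈ ∂U` there exists `g ∈ C(K)` with `g x = 0`,
`g y < 0` for every `y ∈ ∂U \ {x}`, and `Φ (g_U) = g_U` on `U`. -/
theorem stmt11 {K : Type*} [MetricSpace K] [CompactSpace K]
    [MeasurableSpace K] [BorelSpace K]
    (U : Set K) (hUopen : IsOpen U) (hUdense : Dense U)
    (hbd : ∃ a b : K, a ∈ Uᶜ ∧ b ∈ Uᶜ ∧ a ≠ b)
    (Φ : (↥U → ℂ) → (↥U → ℂ))
    (hM : IsMarkovOperator Φ) (hSF : HasStrongFeller Φ)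
    (hA : CondA U Φ) :
    ∀ x ∈ Uᶜ, ∃ g : C(K, ℂ), g x = 0 ∧
      (∀ y ∈ Uᶜ, y ≠ x → g y < 0) ∧
      (∀ u : ↥U, Φ (fun v : ↥U => g v.1) u = g u.1) := by
    classical
  intro x hx
  obtain ⟨h, hhx, hhneg, hhA⟩ := hA x hx
  -- generic facts
  have him_gen : ∀ (e : C(K,ℂ)) (z : K), e z = 0 → (∀ k, k ≠ z → e k < 0) →
      ∀ k : K, (e k).im = 0 := by
    intro e z hz hneg k
    by_cases hk : k = z
    · rw [hk, hz]; rfl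
    · exact (Complex.lt_def.1 (hneg k hk)).2
  have him : ∀ k : K, (h k).im = 0 := him_gen h x hhx hhneg
  set hr : K → ℝ := fun k => (h k).re with hrdef
  have hrcont : Continuous hr := Complex.continuous_re.comp h.continuous
  have hofr : ∀ k : K, ((hr k : ℝ) : ℂ) = h k := fun k =>
    Complex.ext rfl (by simp [him k])
  have hrB : ∀ k, |hr k| ≤ ‖h‖ := fun k =>
    (Complex.abs_re_le_norm _).trans (h.norm_coe_le_norm k)
  -- kernels
  choose P hP1 hPrep using hM
  haveI : ∀ u : ↥U, IsProbabilityMeasure (P u) := hP1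
  set Φr : (↥U → ℝ) → (↥U → ℝ) := fun r u => ∫ v, r v ∂(P u) with hΦrdef
  have hInt : ∀ (r : ↥U → ℝ) (C : ℝ), Measurable r → (∀ v, |r v| ≤ C) →
      ∀ u : ↥U, Integrable r (P u) := fun r C hm hb u =>
    (integrable_const C).mono' hm.aestronglyMeasurable
      (ae_of_all _ fun v => by simpa [Real.norm_eq_abs] using hb v)
  have hrep : ∀ (r : ↥U → ℝ) (C : ℝ), Measurable r → (∀ v, |r v| ≤ C) →
      Φ (fun v => ((r v : ℝ) : ℂ)) = fun u => ((Φr r u : ℝ) : ℂ) := by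
    intro r C hm hb
    funext u
    rw [hPrep u (fun v => ((r v : ℝ) : ℂ)) (by exact Complex.measurable_ofReal.comp hm)
      ⟨C, fun v => by simpa [Complex.norm_real, Real.norm_eq_abs] using hb v⟩]
    exact integral_ofReal
  have hΦrbd : ∀ (r : ↥U → ℝ) (C : ℝ), Measurable r → (∀ v, |r v| ≤ C) →
      ∀ u, |Φr r u| ≤ C := by
    intro r C hm hb u
    have := norm_integral_le_of_norm_le_const (μ := P u) (f := r) (C := C)
      (ae_of_all _ fun v => by simpa [Real.norm_eq_abs] using hb v)
    simpa [Real.norm_eq_abs, measure_univ] using this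
  have hΦrcont : ∀ (r : ↥U → ℝ) (C : ℝ), Measurable r → (∀ v, |r v| ≤ C) →
      Continuous (Φr r) := by
    intro r C hm hb
    have h1 : Continuous (Φ (fun v => ((r v : ℝ) : ℂ))) :=
      hSF _ (Complex.measurable_ofReal.comp hm)
        ⟨C, fun v => by simpa [Complex.norm_real, Real.norm_eq_abs] using hb v⟩
    rw [hrep r C hm hb] at h1
    exact Complex.continuous_re.comp h1
  -- base inequality for barriers
  have hbase_gen : ∀ (e : C(K,ℂ)), (∀ k, (e k).im = 0) →
      (∀ u : ↥U, e u.1 ≤ Φ (fun v : ↥U => e v.1) u) →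
      ∀ v : ↥U, (e v.1).re ≤ Φr (fun w : ↥U => (e w.1).re) v := by
    intro e hime heA v
    have hmr : Measurable (fun w : ↥U => (e w.1).re) :=
      ((Complex.continuous_re.comp e.continuous).comp continuous_subtype_val).measurable
    have hbr : ∀ w : ↥U, |(e w.1).re| ≤ ‖e‖ := fun w =>
      (Complex.abs_re_le_norm _).trans (e.norm_coe_le_norm w.1)
    have h2 : (fun w : ↥U => e w.1) = fun w : ↥U => (((e w.1).re : ℝ) : ℂ) :=
      funext fun w => (Complex.ext (by simp) (by simp [hime w.1]) :
        (((e w.1).re : ℝ) : ℂ) = e w.1).symm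
    have h1 := heA v
    rw [h2, hrep _ ‖e‖ hmr hbr] at h1
    simpa using (Complex.le_def.1 h1).1
  -- the iterates
  set hrU : ↥U → ℝ := fun v => hr v.1 with hrUdef
  have hmhrU : Measurable hrU := (hrcont.comp continuous_subtype_val).measurable
  have hbhrU : ∀ v : ↥U, |hrU v| ≤ ‖h‖ := fun v => hrB v.1
  set F : ℕ → ↥U → ℝ := fun n => Φr^[n] hrU with hFdef
  have hFsucc : ∀ n, F (n+1) = Φr (F n) := fun n => Function.iterate_succ_apply' Φr n hrU
  have hF0 : F 0 = hrU := rfl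
  have hFmb : ∀ n, Measurable (F n) ∧ ∀ v, |F n v| ≤ ‖h‖ := by
    intro n; induction n with
    | zero => exact ⟨hmhrU, hbhrU⟩
    | succ n ih =>
      rw [hFsucc]
      exact ⟨(hΦrcont _ _ ih.1 ih.2).measurable, hΦrbd _ _ ih.1 ih.2⟩
  have hbase : ∀ v : ↥U, hrU v ≤ Φr hrU v := fun v => hbase_gen h him hhA v
  have hΦrmono : ∀ (r s : ↥U → ℝ) (C D : ℝ), Measurable r → (∀ v, |r v| ≤ C) →
      Measurable s → (∀ v, |s v| ≤ D) → (∀ v, r v ≤ s v) → ∀ u, Φr r u ≤ Φr s u := by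
    intro r s C D hmr hbr hms hbs hle u
    exact integral_mono (hInt r C hmr hbr u) (hInt s D hms hbs u) hle
  have hFmono : ∀ n, ∀ v, F n v ≤ F (n+1) v := by
    intro n; induction n with
    | zero => intro v; rw [hFsucc 0]; exact hbase v
    | succ n ih =>
      intro v
      rw [hFsucc n, hFsucc (n+1)]
      exact hΦrmono _ _ _ _ (hFmb n).1 (hFmb n).2 (hFmb (n+1)).1 (hFmb (n+1)).2 ih v
  have hFm : ∀ v, Monotone fun n => F n v := fun v =>
    monotone_nat_of_le_succ fun n => hFmono n v
  have hFbdd : ∀ v, BddAbove (Set.range fun n => F n v) :=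
    fun v => ⟨‖h‖, Set.forall_mem_range.2 fun n => (abs_le.1 ((hFmb n).2 v)).2⟩
  set g0 : ↥U → ℝ := fun v => ⨆ n, F n v with hg0def
  have hg0tend : ∀ v, Tendsto (fun n => F n v) atTop (𝓝 (g0 v)) :=
    fun v => tendsto_atTop_ciSup (hFm v) (hFbdd v)
  have hg0m : Measurable g0 :=
    measurable_of_tendsto_metrizable (fun n => (hFmb n).1) (tendsto_pi_nhds.2 hg0tend)
  have hg0b : ∀ v, |g0 v| ≤ ‖h‖ := fun v => abs_le.2
    ⟨le_trans (abs_le.1 (hbhrU v)).1 (le_ciSup (hFbdd v) 0),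
     ciSup_le fun n => (abs_le.1 ((hFmb n).2 v)).2⟩
  have hg0fix : ∀ u, Φr g0 u = g0 u := by
    intro u
    have hdc : Tendsto (fun n => ∫ v, F n v ∂(P u)) atTop (𝓝 (∫ v, g0 v ∂(P u))) :=
      tendsto_integral_of_dominated_convergence (fun _ => ‖h‖)
        (fun n => (hFmb n).1.aestronglyMeasurable)
        (integrable_const _)
        (fun n => ae_of_all _ fun v => by simpa [Real.norm_eq_abs] using (hFmb n).2 v)
        (ae_of_all _ hg0tend)
    have h3 : ∀ n, ∫ v, F n v ∂(P u) = F (n+1) u := fun n => by rw [hFsucc]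
    have h2 : Tendsto (fun n => F (n+1) u) atTop (𝓝 (g0 u)) :=
      (hg0tend u).comp (tendsto_add_atTop_nat 1)
    exact tendsto_nhds_unique (hdc.congr h3) h2
  have hg0cont : Continuous g0 := by
    have h2 : Continuous (Φr g0) := hΦrcont g0 ‖h‖ hg0m hg0b
    exact (funext hg0fix : Φr g0 = g0) ▸ h2
  -- the extension to K
  set gK : K → ℝ := fun k => if hk : k ∈ U then g0 ⟨k, hk⟩ else hr k with hgKdef
  have hgKU : ∀ (k : K) (hk : k ∈ U), gK k = g0 ⟨k, hk⟩ := fun k hk => dif_pos hk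
  have hgKc : ∀ (k : K), k ∉ U → gK k = hr k := fun k hk => dif_neg hk
  have hgKge : ∀ k, hr k ≤ gK k := by
    intro k
    by_cases hk : k ∈ U
    · rw [hgKU k hk]
      exact le_ciSup (hFbdd ⟨k, hk⟩) 0
    · rw [hgKc k hk]
  -- key boundary estimate
  have hbnd : ∀ y ∈ Uᶜ, ∀ ε : ℝ, 0 < ε → ∃ C : ℝ, 0 ≤ C ∧ ∃ q : K → ℝ,
      Continuous q ∧ q y = 0 ∧ (∀ k, gK k ≤ hr y + ε - C * q k) := by
    intro y hy ε hε
    obtain ⟨hY, hYy, hYneg, hYA⟩ := hA y hy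
    have himY : ∀ k : K, (hY k).im = 0 := him_gen hY y hYy hYneg
    set q : K → ℝ := fun k => (hY k).re with hqdef
    have hqcont : Continuous q := Complex.continuous_re.comp hY.continuous
    have hqy : q y = 0 := by rw [hqdef]; simp [hYy]
    have hqneg : ∀ k, k ≠ y → q k < 0 := fun k hk => by
      simpa using (Complex.lt_def.1 (hYneg k hk)).1
    obtain ⟨C, hC0, hCle⟩ := barrier_dom hr q hrcont hqcont y hqy hqneg ‖h‖
      (fun k => (le_abs_self _).trans (hrB k)) ε hε
    set qU : ↥U → ℝ := fun v => q v.1 with hqUdef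
    have hmqU : Measurable qU := (hqcont.comp continuous_subtype_val).measurable
    have hbqU : ∀ v : ↥U, |qU v| ≤ ‖hY‖ := fun v =>
      (Complex.abs_re_le_norm _).trans
        (hY.norm_coe_le_norm v.1)
    have hqbase : ∀ v : ↥U, qU v ≤ Φr qU v := fun v => hbase_gen hY himY hYA v
    have hFle : ∀ n, ∀ v : ↥U, F n v ≤ hr y + ε - C * qU v := by
      intro n; induction n with
      | zero => intro v; exact hCle v.1
      | succ n ih =>
        intro v
        rw [hFsucc]
        have h1 : Φr (F n) v ≤ Φr (fun w => hr y + ε - C * qU w) v :=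
          integral_mono (hInt _ ‖h‖ (hFmb n).1 (hFmb n).2 v)
            ((integrable_const _).sub ((hInt qU ‖hY‖ hmqU hbqU v).const_mul C)) ih
        have h2 : Φr (fun w => hr y + ε - C * qU w) v = (hr y + ε) - C * Φr qU v := by
          show ∫ w, (hr y + ε - C * qU w) ∂(P v) = _
          rw [integral_sub (integrable_const _) ((hInt qU ‖hY‖ hmqU hbqU v).const_mul C),
            integral_const, integral_const_mul]
          simp; left; rfl
        have h3 : qU v ≤ Φr qU v := hqbase v
        have h4 : C * qU v ≤ C * Φr qU v := mul_le_mul_of_nonneg_left h3 hC0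
        calc Φr (F n) v ≤ (hr y + ε) - C * Φr qU v := h2 ▸ h1
          _ ≤ hr y + ε - C * qU v := by linarith
    refine ⟨C, hC0, q, hqcont, hqy, fun k => ?_⟩
    by_cases hk : k ∈ U
    · rw [hgKU k hk]; exact ciSup_le fun n => hFle n ⟨k, hk⟩
    · rw [hgKc k hk]; exact hCle k
  -- continuity of gK
  have hgKcont : Continuous gK := by
    rw [continuous_iff_continuousAt]
    intro k
    by_cases hk : k ∈ U
    · have hres : Continuous (U.restrict gK) := by
        have : U.restrict gK = g0 := funext fun u => by
          show gK u.1 = g0 u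
          rw [hgKU u.1 u.2]
        rw [this]; exact hg0cont
      exact (continuousOn_iff_continuous_restrict.2 hres).continuousAt (hUopen.mem_nhds hk)
    · have hky : gK k = hr k := hgKc k hk
      rw [ContinuousAt, hky, tendsto_order]
      constructor
      · intro a ha
        have h1 : ∀ᶠ z in 𝓝 k, a < hr z := (hrcont.tendsto k).eventually_const_lt ha
        filter_upwards [h1] with z hz using lt_of_lt_of_le hz (hgKge z)
      · intro a ha
        have hε : 0 < (a - hr k)/3 := by linarith
        obtain ⟨C, hC0, q, hqcont, hqy, hCle⟩ := hbnd k hk _ hε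
        have h2 : Tendsto (fun z => hr k + (a - hr k)/3 - C * q z) (𝓝 k)
            (𝓝 (hr k + (a - hr k)/3 - C * q k)) :=
          (continuous_const.sub (continuous_const.mul hqcont)).tendsto k
        have h5 : hr k + (a - hr k)/3 - C * q k < a := by rw [hqy]; linarith
        have h3 : ∀ᶠ z in 𝓝 k, hr k + (a - hr k)/3 - C * q z < a :=
          h2.eventually_lt_const h5
        filter_upwards [h3] with z hz using lt_of_le_of_lt (hCle z) hz
  -- conclusion
  refine ⟨⟨fun k => ((gK k : ℝ) : ℂ), Complex.continuous_ofReal.comp hgKcont⟩, ?_, ?_, ?_⟩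
  · show ((gK x : ℝ) : ℂ) = 0
    rw [hgKc x hx]
    simp [hrdef, hhx]
  · intro y hy hyx
    show ((gK y : ℝ) : ℂ) < 0
    rw [hgKc y hy]
    have h1 : hr y < 0 := by simpa using (Complex.lt_def.1 (hhneg y hyx)).1
    rw [Complex.lt_def]
    constructor
    · simpa using h1
    · simp
  · intro u
    show Φ (fun v : ↥U => ((gK v.1 : ℝ) : ℂ)) u = ((gK u.1 : ℝ) : ℂ)
    have heq : (fun v : ↥U => ((gK v.1 : ℝ) : ℂ)) = fun v : ↥U => ((g0 v : ℝ) : ℂ) :=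
      funext fun v => by rw [hgKU v.1 v.2]
    rw [heq, hrep g0 ‖h‖ hg0m hg0b, hgKU u.1 u.2]
    show ((Φr g0 u : ℝ) : ℂ) = _
    rw [hg0fix u]
end
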